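/- Let G = (V,E) be a directed graph with |V| = n ≥ 1 and let d, h be integers with 1 ≤ d ≤ n, 1 ≤ h ≤ n and d·h ≥ 6n; set ℓ := ⌊dh/(6n)⌋ (so ℓ ≥ 1). Suppose V is partitioned into nonempty blocks B₁, …, B_m with m ≤ 2n/d such that every edge (u,v) ∈ E with u ∈ B_i and v ∈ B_j satisfies i ≤ j. Suppose further that for every block B among B₁, …, B_m a set H_B ⊆ B is given such that for all x,y ∈ B with δ_{G[B]}(x,y) < ∞, either δ_{G[B]}(x,y) < ℓ or there exists v ∈ H_B with δ_{G[B]}(x,v) ≤ ℓ and δ_{G[B]}(v,y) < ∞. Let H* := H_{B₁} ∪ ⋯ ∪ H_{B_m}. Then for all s,t ∈ V with δ_G(s,t) < ∞, either δ_G(s,t) ≤ h, or there exists v ∈ H* with δ_G(s,v) ≤ h and δ_G(v,t) < ∞. -/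
import Mathlib


open scoped Classical

namespace Paper

variable {V : Type*}

/-- `p` (restricted to indices `0,…,k`) is a walk of length `k` w.r.t. the edge relation `E`. -/
def IsWalk (E : V → V → Prop) (k : ℕ) (p : ℕ → V) : Prop :=
  ∀ i, i < k → E (p i) (p (i + 1))

/-- The distance `δ_G(s,t)`. -/
noncomputable def gdist (E : V → V → Prop) (s t : V) : ℕ∞ :=
  ⨅ (k : ℕ) (_ : ∃ p : ℕ → V, p 0 = s ∧ p k = t ∧ IsWalk E k p), (k : ℕ∞)

/-- The induced subgraph `G[W]`. -/
def induce (E : V → V → Prop) (W : Set V) : V → V → Prop :=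
  fun u v => E u v ∧ u ∈ W ∧ v ∈ W

lemma gdist_le_of_walk (E : V → V → Prop) {s t : V} {k : ℕ} {p : ℕ → V}
    (h0 : p 0 = s) (hk : p k = t) (hw : IsWalk E k p) : gdist E s t ≤ (k : ℕ∞) := by
  refine le_trans (iInf_le _ k) ?_
  exact iInf_le _ ⟨p, h0, hk, hw⟩
lemma exists_walk_of_ne_top (E : V → V → Prop) {s t : V} (h : gdist E s t ≠ ⊤) :
    ∃ k : ℕ, ∃ p : ℕ → V, p 0 = s ∧ p k = t ∧ IsWalk E k p ∧ gdist E s t = (k : ℕ∞) := by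
  have hne : ∃ k : ℕ, ∃ p : ℕ → V, p 0 = s ∧ p k = t ∧ IsWalk E k p := by
    by_contra hc
    push_neg at hc
    apply h
    unfold gdist
    refine iInf_eq_top.2 fun k => iInf_eq_top.2 fun hk => absurd hk ?_
    push_neg
    intro p hp0 hpk hw
    exact hc k p hp0 hpk hw
  classical
  obtain ⟨p, h0, hk, hw⟩ := Nat.find_spec hne
  refine ⟨Nat.find hne, p, h0, hk, hw, le_antisymm (gdist_le_of_walk E h0 hk hw) ?_⟩
  refine le_iInf fun j => le_iInf fun hj => ?_
  exact_mod_cast Nat.find_min' hne hj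
lemma walk_concat (E : V → V → Prop) {a b : ℕ} {p q : ℕ → V} (hpq : p a = q 0)
    (hp : IsWalk E a p) (hq : IsWalk E b q) :
    ∃ r : ℕ → V, r 0 = p 0 ∧ r (a + b) = q b ∧ IsWalk E (a + b) r := by
  refine ⟨fun i => if i < a then p i else q (i - a), ?_, ?_, ?_⟩
  · by_cases h0 : 0 < a
    · simp [h0]
    · have ha : a = 0 := by omega
      simp [ha, ← hpq, ha]
  · simp
  · intro i hi
    by_cases hia : i < a
    · by_cases hia1 : i + 1 < a
      · simpa [hia, hia1] using hp i hia
      · have hEq : i + 1 = a := by omega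
        simp only [hia, if_pos, hia1, if_neg, hEq]
        simp [← hpq, ← hEq]
        exact hp i hia
    · have h1 : ¬ i + 1 < a := by omega
      simp only [hia, if_neg, h1]
      have hEq : i + 1 - a = (i - a) + 1 := by omega
      rw [hEq]
      exact hq (i - a) (by omega)
lemma isWalk_of_induce {E : V → V → Prop} {W : Set V} {k : ℕ} {p : ℕ → V}
    (h : IsWalk (induce E W) k p) : IsWalk E k p := fun i hi => (h i hi).1

/-- **Lemma 7.2, self-contained.** With `ℓ := ⌊dh/(6n)⌋`, if `V` is partitioned into at most
`2n/d` blocks `B₁,…,B_m` respecting a topological order (no edge goes from a later block to an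
earlier one) and every block `B` carries a weak hitting set `H_B ⊆ B` with parameter `ℓ` for
`G[B]`, then `H* = ⋃ H_B` satisfies: for all `s,t` with `δ_G(s,t) < ∞`, either
`δ_G(s,t) ≤ h` or there is `v ∈ H*` with `δ_G(s,v) ≤ h` and `δ_G(v,t) < ∞`. -/
theorem block_hitting {V : Type*} [Fintype V]
    (E : V → V → Prop) (n d h : ℕ)
    (hn : Fintype.card V = n) (hn1 : 1 ≤ n)
    (hd1 : 1 ≤ d) (hdn : d ≤ n) (hh1 : 1 ≤ h) (hhn : h ≤ n)
    (hdh : 6 * n ≤ d * h)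
    (m : ℕ) (B : Fin m → Set V)
    (hm : (m : ℝ) ≤ 2 * (n : ℝ) / (d : ℝ))
    (hBne : ∀ i, (B i).Nonempty)
    (hBdisj : ∀ i j, i ≠ j → Disjoint (B i) (B j))
    (hBcover : ∀ v : V, ∃ i, v ∈ B i)
    (hTopo : ∀ u v : V, E u v → ∀ i j, u ∈ B i → v ∈ B j → i ≤ j)
    (HB : Fin m → Set V)
    (hHBsub : ∀ i, HB i ⊆ B i)
    (hHit : ∀ i, ∀ x ∈ B i, ∀ y ∈ B i, gdist (induce E (B i)) x y ≠ ⊤ →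
      gdist (induce E (B i)) x y < ((d * h / (6 * n) : ℕ) : ℕ∞) ∨
      ∃ v ∈ HB i, gdist (induce E (B i)) x v ≤ ((d * h / (6 * n) : ℕ) : ℕ∞) ∧
        gdist (induce E (B i)) v y ≠ ⊤) :
    ∀ s t : V, gdist E s t ≠ ⊤ →
      gdist E s t ≤ (h : ℕ∞) ∨
      ∃ v : V, (∃ i, v ∈ HB i) ∧ gdist E s v ≤ (h : ℕ∞) ∧ gdist E v t ≠ ⊤ := by
  intro s t hst
  by_cases hle : gdist E s t ≤ (h : ℕ∞)
  · exact Or.inl hle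
  right
  push_neg at hle
  obtain ⟨k, p, hp0, hpk, hpw, hkeq⟩ := exists_walk_of_ne_top E hst
  have hhk : h < k := by
    rw [hkeq] at hle
    exact_mod_cast hle
  set ℓ : ℕ := d * h / (6 * n) with hℓdef
  -- arithmetic facts
  have hℓ1 : 1 ≤ ℓ := by
    rw [hℓdef]
    exact (Nat.one_le_div_iff (by omega)).2 hdh
  have hmlh : m * ℓ ≤ h := by
    have hd0 : (0:ℝ) < (d:ℝ) := by exact_mod_cast hd1
    have hn0 : (0:ℝ) < (n:ℝ) := by exact_mod_cast hn1
    have hℓr : (ℓ:ℝ) ≤ (d:ℝ) * (h:ℝ) / (6 * (n:ℝ)) := by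
      rw [hℓdef]
      have := Nat.cast_div_le (α := ℝ) (m := d * h) (n := 6 * n)
      push_cast at this ⊢
      linarith [this]
    have hml : (m:ℝ) * (ℓ:ℝ) ≤ (2 * (n:ℝ) / (d:ℝ)) * ((d:ℝ) * (h:ℝ) / (6 * (n:ℝ))) := by
      have hℓ0 : (0:ℝ) ≤ (ℓ:ℝ) := by positivity
      have hm0 : (0:ℝ) ≤ (m:ℝ) := by positivity
      exact mul_le_mul hm hℓr hℓ0 (by positivity)
    have heq : (2 * (n:ℝ) / (d:ℝ)) * ((d:ℝ) * (h:ℝ) / (6 * (n:ℝ))) = (h:ℝ) / 3 := by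
      field_simp; ring
    rw [heq] at hml
    have : (m * ℓ : ℝ) ≤ (h:ℝ) := by push_cast; linarith
    exact_mod_cast this
  -- block index function along the walk
  have huniq : ∀ (v : V) (i j : Fin m), v ∈ B i → v ∈ B j → i = j := by
    intro v i j hi hj
    by_contra hne
    exact (Set.disjoint_left.1 (hBdisj i j hne)) hi hj
  choose f hf using fun j => hBcover (p j)
  have hmono : ∀ a b : ℕ, a ≤ b → b ≤ k → f a ≤ f b := by
    intro a b hab hbk
    induction b, hab using Nat.le_induction with
    | base => exact le_refl _
    | succ b hab ih =>
      exact le_trans (ih (by omega))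
        (hTopo _ _ (hpw b (by omega)) _ _ (hf b) (hf (b+1)))
  -- find a long segment within one block
  have hexj : ∃ j : ℕ, j + ℓ ≤ h ∧ f j = f (j + ℓ) := by
    by_contra hc
    push_neg at hc
    have key : ∀ j : ℕ, j ≤ m → j ≤ (f (j * ℓ)).val := by
      intro j
      induction j with
      | zero => intro _; simp
      | succ j ih =>
        intro hjm
        have h1 : j * ℓ + ℓ ≤ h := by
          have h2 : (j + 1) * ℓ ≤ m * ℓ := Nat.mul_le_mul_right _ hjm
          calc j * ℓ + ℓ = (j + 1) * ℓ := by ring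
            _ ≤ m * ℓ := h2
            _ ≤ h := hmlh
        have hne := hc (j * ℓ) h1
        have hle2 : f (j * ℓ) ≤ f (j * ℓ + ℓ) :=
          hmono (j * ℓ) (j * ℓ + ℓ) (Nat.le_add_right _ _) (by omega)
        have hlt : (f (j * ℓ)).val < (f (j * ℓ + ℓ)).val :=
          lt_of_le_of_ne hle2 (fun hval => hne (Fin.ext hval))
        have hih := ih (by omega)
        have hEq : (j + 1) * ℓ = j * ℓ + ℓ := by ring
        rw [hEq]
        omega
    have h1 := key m le_rfl
    have h2 := (f (m * ℓ)).isLt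
    omega
  obtain ⟨j, hjh, hjeq⟩ := hexj
  set i : Fin m := f j with hidef
  -- all vertices of the segment lie in B i
  have hseg : ∀ r : ℕ, j ≤ r → r ≤ j + ℓ → p r ∈ B i := by
    intro r h1 h2
    have ha : f j ≤ f r := hmono j r h1 (by omega)
    have hb : f r ≤ f (j + ℓ) := hmono r (j + ℓ) h2 (by omega)
    rw [← hjeq] at hb
    have : f r = f j := le_antisymm hb ha
    rw [hidef, ← this]
    exact hf r
  -- the segment is a walk in the induced graph
  have hsegwalk : IsWalk (induce E (B i)) ℓ (fun r => p (j + r)) := by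
    intro r hr
    simp only []
    have hEq : j + (r + 1) = (j + r) + 1 := by omega
    rw [hEq]
    exact ⟨hpw (j + r) (by omega), hseg (j + r) (by omega) (by omega),
      hseg ((j + r) + 1) (by omega) (by omega)⟩
  have hsegle : gdist (induce E (B i)) (p j) (p (j + ℓ)) ≤ (ℓ : ℕ∞) := by
    have := gdist_le_of_walk (induce E (B i)) (s := p j) (t := p (j + ℓ))
      (p := fun r => p (j + r)) (by simp) (by simp) hsegwalk
    exact this
  have hsegne : gdist (induce E (B i)) (p j) (p (j + ℓ)) ≠ ⊤ :=
    (lt_of_le_of_lt hsegle (WithTop.coe_lt_top ℓ)).ne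
  -- the suffix walk from p (j+ℓ) to t
  have hsuffwalk : IsWalk E (k - (j + ℓ)) (fun r => p (j + ℓ + r)) := by
    intro r hr
    simp only []
    have hEq : j + ℓ + (r + 1) = (j + ℓ + r) + 1 := by omega
    rw [hEq]
    exact hpw (j + ℓ + r) (by omega)
  have hsuffend : (fun r => p (j + ℓ + r)) (k - (j + ℓ)) = t := by
    simp only []
    have : j + ℓ + (k - (j + ℓ)) = k := by omega
    rw [this, hpk]
  -- prefix walk from s to p j
  have hprewalk : IsWalk E j p := fun r hr => hpw r (by omega)
  rcases hHit i (p j) (hseg j le_rfl (by omega)) (p (j + ℓ))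
      (hseg (j + ℓ) (by omega) le_rfl) hsegne with hcase | ⟨v, hv, hxv, hvy⟩
  · -- short-distance case: contradiction with minimality of k
    exfalso
    obtain ⟨c, w, hw0, hwc, hww, hwdist⟩ := exists_walk_of_ne_top _ hsegne
    have hcℓ : c < ℓ := by
      rw [hwdist] at hcase
      exact_mod_cast hcase
    obtain ⟨r1, hr10, hr1e, hr1w⟩ :=
      walk_concat E (a := j) (b := c) (p := p) (q := w) (by rw [hw0])
        hprewalk (isWalk_of_induce hww)
    obtain ⟨r2, hr20, hr2e, hr2w⟩ :=
      walk_concat E (a := j + c) (b := k - (j + ℓ)) (p := r1)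
        (q := fun r => p (j + ℓ + r)) (by rw [hr1e, hwc]; simp)
        hr1w hsuffwalk
    have hfin : gdist E s t ≤ ((j + c + (k - (j + ℓ)) : ℕ) : ℕ∞) := by
      apply gdist_le_of_walk E (p := r2)
      · rw [hr20, hr10, hp0]
      · rw [hr2e]; exact hsuffend
      · exact hr2w
    rw [hkeq] at hfin
    have : k ≤ j + c + (k - (j + ℓ)) := by exact_mod_cast hfin
    omega
  · -- hitting case
    obtain ⟨c, w, hw0, hwc, hww, hwdist⟩ := exists_walk_of_ne_top _
      ((lt_of_le_of_lt hxv (WithTop.coe_lt_top ℓ)).ne)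
    have hcℓ : c ≤ ℓ := by
      rw [hwdist] at hxv
      exact_mod_cast hxv
    obtain ⟨c', w', hw0', hwc', hww', _⟩ := exists_walk_of_ne_top _ hvy
    refine ⟨v, ⟨i, hv⟩, ?_, ?_⟩
    · -- gdist E s v ≤ h
      obtain ⟨r1, hr10, hr1e, hr1w⟩ :=
        walk_concat E (a := j) (b := c) (p := p) (q := w) (by rw [hw0])
          hprewalk (isWalk_of_induce hww)
      have hle1 : gdist E s v ≤ ((j + c : ℕ) : ℕ∞) := by
        apply gdist_le_of_walk E (p := r1)
        · rw [hr10, hp0]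
        · rw [hr1e, hwc]
        · exact hr1w
      refine le_trans hle1 ?_
      exact_mod_cast (by omega : j + c ≤ h)
    · -- gdist E v t ≠ ⊤
      obtain ⟨r2, hr20, hr2e, hr2w⟩ :=
        walk_concat E (a := c') (b := k - (j + ℓ)) (p := w')
          (q := fun r => p (j + ℓ + r)) (by rw [hwc']; simp)
          (isWalk_of_induce hww') hsuffwalk
      have hle2 : gdist E v t ≤ ((c' + (k - (j + ℓ)) : ℕ) : ℕ∞) := by
        apply gdist_le_of_walk E (p := r2)
        · rw [hr20, hw0']
        · rw [hr2e]; exact hsuffend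
        · exact hr2w
      exact (lt_of_le_of_lt hle2 (WithTop.coe_lt_top _)).ne

end Paper
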